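/- Every sublattice of a finite dismantlable lattice is dismantlable. -/

import Mathlib

/-- A finite lattice `L` with `n` elements is *dismantlable* if there is a chain
`L₁ ⊆ L₂ ⊆ ... ⊆ Lₙ = L` of sublattices of `L` with `|Lᵢ| = i` for `i = 1, ..., n`. -/
def Dismantlable (L : Type*) [Lattice L] [Finite L] : Prop :=
  ∃ c : ℕ → Set L,
    (∀ i, 1 ≤ i → i ≤ Nat.card L → IsSublattice (c i) ∧ Nat.card (c i) = i) ∧
    (∀ i, 1 ≤ i → i < Nat.card L → c i ⊆ c (i + 1)) ∧
    c (Nat.card L) = Set.univ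

/-- `x 0, y 0, x 1, y 1, ..., x (n-1), y (n-1)` form a *crown of order `2n`* (for `n ≥ 3`)
in a poset: the `2n` elements are pairwise distinct, and the only comparability relations
among them are `x i ≤ y i` and `x (i+1) ≤ y i` (indices mod `n`). -/
def IsCrown {P : Type*} [PartialOrder P] {n : ℕ} (x y : Fin n → P) : Prop :=
  3 ≤ n ∧ Function.Injective x ∧ Function.Injective y ∧
  (∀ i j, x i ≠ y j) ∧
  (∀ i j, x i ≤ x j → i = j) ∧
  (∀ i j, y i ≤ y j → i = j) ∧
  (∀ i j, ¬ y i ≤ x j) ∧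
  (∀ i j, x i ≤ y j ↔ (i = j ∨ (i : ℕ) = ((j : ℕ) + 1) % n))

section DismAux

open Set

variable {L : Type*} [Lattice L] [Finite L]

/-- Set-level version of dismantlability. -/
def DismSet (A : Set L) : Prop :=
  ∃ c : ℕ → Set L,
    (∀ i, 1 ≤ i → i ≤ Nat.card A → IsSublattice (c i) ∧ Nat.card (c i) = i) ∧
    (∀ i, 1 ≤ i → i < Nat.card A → c i ⊆ c (i + 1)) ∧
    c (Nat.card A) = A

lemma chain_subset {c : ℕ → Set L} {n : ℕ}
    (h : ∀ i, 1 ≤ i → i < n → c i ⊆ c (i + 1)) :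
    ∀ i, 1 ≤ i → i ≤ n → c i ⊆ c n := by
  intro i hi hin
  induction n with
  | zero => omega
  | succ m ih =>
    rcases Nat.lt_or_ge i (m + 1) with hlt | hge
    · have h1 : c i ⊆ c m := by
        rcases Nat.eq_zero_or_pos m with rfl | hm
        · exact absurd hi (by omega)
        · exact ih (fun j hj hjm => h j hj (by omega)) (by omega)
      exact h1.trans (h m (by omega) (by omega))
    · have : i = m + 1 := by omega
      subst this; exact subset_rfl

lemma dismSet_mono (n : ℕ) : ∀ (A S : Set L), IsSublattice A → IsSublattice S →
    S ⊆ A → Nat.card A = n → DismSet A → DismSet S := by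
  induction n using Nat.strong_induction_on with
  | _ n IH =>
  intro A S hA hS hSA hcard hDA
  have hAfin : A.Finite := A.toFinite
  have hSfin : S.Finite := S.toFinite
  by_cases hsmall : Nat.card S ≤ 1
  · refine ⟨fun _ => S, ?_, ?_, rfl⟩
    · intro i hi hin
      have h1 : Nat.card S = 1 := le_antisymm hsmall (hi.trans hin)
      refine ⟨hS, ?_⟩
      show Nat.card S = i
      omega
    · intro i hi hin; omega
  push_neg at hsmall
  have hcardSA : Nat.card S ≤ Nat.card A := by
    rw [Nat.card_coe_set_eq, Nat.card_coe_set_eq]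
    exact Set.ncard_le_ncard hSA hAfin
  have hn2 : 2 ≤ n := by omega
  obtain ⟨c, hc1, hc2, hc3⟩ := hDA
  rw [hcard] at hc1 hc2 hc3
  set B := c (n - 1) with hB
  obtain ⟨hBsub, hBcard⟩ := hc1 (n - 1) (by omega) (by omega)
  have hBA : B ⊆ A := by
    have := hc2 (n - 1) (by omega) (by omega)
    rwa [show n - 1 + 1 = n by omega, hc3] at this
  have hBncard : B.ncard = n - 1 := by rwa [← Nat.card_coe_set_eq]
  have hAncard : A.ncard = n := by rwa [← Nat.card_coe_set_eq]
  have hne : (A \ B).Nonempty := by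
    rw [Set.diff_nonempty]
    intro hAB
    have := Set.ncard_le_ncard hAB B.toFinite
    omega
  obtain ⟨a, haA, haB⟩ := hne
  have hBeq : B = A \ {a} := by
    apply Set.eq_of_subset_of_ncard_le
    · exact fun x hx => ⟨hBA hx, fun h => haB (h ▸ hx)⟩
    · rw [Set.ncard_diff_singleton_of_mem haA, hAncard, hBncard]
    · exact hAfin.diff
  have hDB : DismSet B := by
    refine ⟨c, ?_, ?_, ?_⟩
    · intro i hi hin
      rw [Nat.card_coe_set_eq, hBncard] at hin
      exact hc1 i hi (by omega)
    · intro i hi hin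
      rw [Nat.card_coe_set_eq, hBncard] at hin
      exact hc2 i hi (by omega)
    · rw [Nat.card_coe_set_eq, hBncard]
  by_cases haS : a ∈ S
  · -- remove a from S, recurse into B, then append S
    set T := S \ {a} with hT
    have hTB : T ⊆ B := by
      rw [hBeq]; exact fun x hx => ⟨hSA hx.1, hx.2⟩
    have hTsub : IsSublattice T := by
      constructor
      · intro x hx y hy
        refine ⟨hS.supClosed hx.1 hy.1, ?_⟩
        have : x ⊔ y ∈ B := hBsub.supClosed (hTB hx) (hTB hy)
        rw [hBeq] at this; exact this.2
      · intro x hx y hy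
        refine ⟨hS.infClosed hx.1 hy.1, ?_⟩
        have : x ⊓ y ∈ B := hBsub.infClosed (hTB hx) (hTB hy)
        rw [hBeq] at this; exact this.2
    have hScard : S.ncard = Nat.card S := (Nat.card_coe_set_eq S).symm
    have hTcard : T.ncard = Nat.card S - 1 := by
      rw [hT, Set.ncard_diff_singleton_of_mem haS, hScard]
    have hDT : DismSet T :=
      IH (n - 1) (by omega) B T hBsub hTsub hTB (by rwa [Nat.card_coe_set_eq]) hDB
    obtain ⟨d, hd1, hd2, hd3⟩ := hDT
    rw [Nat.card_coe_set_eq, hTcard] at hd1 hd2 hd3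
    set m := Nat.card S with hm
    refine ⟨fun i => if i ≤ m - 1 then d i else S, ?_, ?_, ?_⟩
    · intro i hi hin
      beta_reduce
      split_ifs with hcase
      · exact hd1 i hi hcase
      · exact ⟨hS, by omega⟩
    · intro i hi hin
      beta_reduce
      split_ifs with h1 h2 h2
      · exact hd2 i hi (by omega)
      · have : i = m - 1 := by omega
        subst this
        rw [hd3]
        exact fun x hx => hx.1
      · omega
      · omega
    · beta_reduce
      rw [if_neg (by omega)]
  · have hSB : S ⊆ B := by
      rw [hBeq]; exact fun x hx => ⟨hSA hx, fun h => haS (h ▸ hx)⟩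
    exact IH (n - 1) (by omega) B S hBsub hS hSB (by rwa [Nat.card_coe_set_eq]) hDB

end DismAux

open Set in
/-- Every sublattice of a finite dismantlable lattice is dismantlable. -/
theorem stmt1 {L : Type*} [Lattice L] [Finite L] (hL : Dismantlable L)
    (S : Sublattice L) : Dismantlable S := by
  have hUsub : IsSublattice (Set.univ : Set L) :=
    ⟨fun _ _ _ _ => Set.mem_univ _, fun _ _ _ _ => Set.mem_univ _⟩
  have hSsub : IsSublattice (S : Set L) := ⟨S.supClosed, S.infClosed⟩
  have hDU : DismSet (Set.univ : Set L) := by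
    obtain ⟨c, hc1, hc2, hc3⟩ := hL
    have hucard : Nat.card ((Set.univ : Set L)) = Nat.card L := by
      rw [Nat.card_coe_set_eq, Set.ncard_univ]
    exact ⟨c, by rw [hucard]; exact hc1, by rw [hucard]; exact hc2, by rw [hucard]; exact hc3⟩
  have hDS : DismSet (S : Set L) :=
    dismSet_mono (Nat.card ((Set.univ : Set L))) Set.univ S hUsub hSsub
      (Set.subset_univ _) rfl hDU
  obtain ⟨c, hc1, hc2, hc3⟩ := hDS
  have hcardS : Nat.card S = Nat.card ((S : Set L)) := rfl
  have hsub : ∀ i, 1 ≤ i → i ≤ Nat.card S → c i ⊆ (S : Set L) := by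
    intro i hi hin
    have h := chain_subset hc2 i hi (by omega)
    rwa [hc3] at h
  refine ⟨fun i => {x : S | (x : L) ∈ c i}, ?_, ?_, ?_⟩
  · intro i hi hin
    obtain ⟨hsl, hcd⟩ := hc1 i hi (by omega)
    refine ⟨⟨?_, ?_⟩, ?_⟩
    · intro x hx y hy
      show ((x ⊔ y : S) : L) ∈ c i
      rw [Sublattice.coe_sup]
      exact hsl.supClosed hx hy
    · intro x hx y hy
      show ((x ⊓ y : S) : L) ∈ c i
      rw [Sublattice.coe_inf]
      exact hsl.infClosed hx hy
    · have e : {x : S | (x : L) ∈ c i} ≃ c i :=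
        ⟨fun x => ⟨x.1.1, x.2⟩, fun y => ⟨⟨y.1, hsub i hi hin y.2⟩, y.2⟩,
          fun x => rfl, fun y => rfl⟩
      exact (Nat.card_congr e).trans hcd
  · intro i hi hin
    exact fun x hx => hc2 i hi (by omega) hx
  · ext x
    simp only [Set.mem_setOf_eq, Set.mem_univ, iff_true]
    rw [hcardS, hc3]
    exact x.2
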